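/- Consider an ordered linear-probing hash table with $n$ slots containing $(1-1/x)n$ elements with i.i.d. uniform hashes and no tombstones. For any query, its running time $T$ satisfies $\Pr[T \ge kx] \le 2^{-\Omega(k)}$ for all $k \ge 1$. -/

import Mathlib

open scoped Classical

/-- Linear probing placement: a key with hash `h` lands in the first free position
at or after `h`. -/
noncomputable def placePos (occ : Finset ℕ) (h : ℕ) : ℕ :=
  sInf {p | h ≤ p ∧ p ∉ occ}

/-- The set of occupied positions after linear-probing insertions of a list of
hashes. -/
noncomputable def occAfter : List ℕ → Finset ℕ
  | [] => ∅
  | h :: rest => insert (placePos (occAfter rest) h) (occAfter rest)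

/-- Running time of a query hashing to position `q` in an ordered linear-probing
table: the scan starting at `q` examines precisely the elements residing in
positions `≥ q` whose hash is `≤ q`, plus one final slot. Since every element
resides at a position at least its hash, this count equals the number of occupied
positions `≥ q` minus the number of elements with hash `> q`. -/
noncomputable def queryTime {m n : ℕ} (ω : Fin m → Fin n) (q : ℕ) : ℕ :=
  1 + (((occAfter (List.ofFn fun u => (ω u : ℕ))).filter (fun p => q ≤ p)).card -
    (Finset.univ.filter (fun u : Fin m => q < (ω u : ℕ))).card)

namespace S16
open Finset Function

variable {n m : ℕ}

def cnt (q : ℕ) (ω : Fin m → Fin n) (i : ℕ) : ℕ :=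
  (univ.filter fun u => i ≤ (ω u : ℕ) ∧ (ω u : ℕ) ≤ q).card

def Xs (q t : ℕ) (ω : Fin m → Fin n) : Finset ℕ :=
  (Finset.range (q+1)).filter fun i => q - i + t ≤ cnt q ω i

noncomputable def istar (q t : ℕ) (ω : Fin m → Fin n) : ℕ :=
  if h : (Xs q t ω).Nonempty then (Xs q t ω).min' h else 0

noncomputable def EtF (n m q t : ℕ) : Finset (Fin m → Fin n) :=
  univ.filter fun ω => (Xs q t ω).Nonempty

lemma mem_Xs {q t i : ℕ} {ω : Fin m → Fin n} :
    i ∈ Xs q t ω ↔ i ≤ q ∧ q - i + t ≤ cnt q ω i := by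
  simp [Xs, Nat.lt_succ_iff]

lemma istar_mem {q t : ℕ} {ω : Fin m → Fin n} (h : (Xs q t ω).Nonempty) :
    istar q t ω ∈ Xs q t ω := by
  rw [istar, dif_pos h]; exact Finset.min'_mem _ _

lemma istar_le {q t i : ℕ} {ω : Fin m → Fin n} (h : (Xs q t ω).Nonempty)
    (hi : i ∈ Xs q t ω) : istar q t ω ≤ i := by
  rw [istar, dif_pos h]; exact Finset.min'_le _ _ hi

lemma cnt_eq_sum (q : ℕ) (ω : Fin m → Fin n) (i : ℕ) :
    cnt q ω i = ∑ u, if i ≤ (ω u : ℕ) ∧ (ω u : ℕ) ≤ q then 1 else 0 :=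
  Finset.card_filter _ _

lemma cnt_update (q : ℕ) (ω : Fin m → Fin n) (u : Fin m) (w : Fin n) (i : ℕ) :
    cnt q (Function.update ω u w) i + (if i ≤ (ω u : ℕ) ∧ (ω u : ℕ) ≤ q then 1 else 0)
      = cnt q ω i + (if i ≤ (w : ℕ) ∧ (w : ℕ) ≤ q then 1 else 0) := by
  have key : ∀ σ : Fin m → Fin n, cnt q σ i =
      (if i ≤ (σ u : ℕ) ∧ (σ u : ℕ) ≤ q then 1 else 0) +
        ∑ u' ∈ univ.erase u, (if i ≤ (σ u' : ℕ) ∧ (σ u' : ℕ) ≤ q then 1 else 0) := by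
    intro σ
    rw [cnt_eq_sum, ← Finset.add_sum_erase _ _ (mem_univ u)]
  rw [key, key]
  have h1 : ∑ u' ∈ univ.erase u,
      (if i ≤ ((Function.update ω u w) u' : ℕ) ∧ ((Function.update ω u w) u' : ℕ) ≤ q then 1 else 0)
      = ∑ u' ∈ univ.erase u, (if i ≤ (ω u' : ℕ) ∧ (ω u' : ℕ) ≤ q then 1 else 0) := by
    refine Finset.sum_congr rfl fun u' hu' => ?_
    rw [Function.update_of_ne (Finset.ne_of_mem_erase hu')]
  rw [h1]
  simp only [Function.update_self]
  omega

def FS (p : (Fin m → Fin n) × Fin m × Fin n) : (Fin m → Fin n) × Fin m × Fin n :=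
  (Function.update p.1 p.2.1 p.2.2, p.2.1, p.1 p.2.1)

noncomputable def DomS (n m q t : ℕ) : Finset ((Fin m → Fin n) × Fin m × Fin n) :=
  univ.filter fun p => (Xs q t p.1).Nonempty ∧
    istar q t p.1 ≤ (p.1 p.2.1 : ℕ) ∧ (p.1 p.2.1 : ℕ) ≤ q

noncomputable def RngS (n m q t : ℕ) : Finset ((Fin m → Fin n) × Fin m × Fin n) :=
  (DomS n m q t).image FS

noncomputable def WS (n m : ℕ) (q t : ℕ) (ω : Fin m → Fin n) : ℝ :=
  ((n : ℝ) * (cnt q ω (istar q t ω)))⁻¹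

lemma FS_inj : Function.Injective (FS (n := n) (m := m)) := by
  rintro ⟨ω1, u1, v1⟩ ⟨ω2, u2, v2⟩ h
  simp only [FS, Prod.mk.injEq] at h
  obtain ⟨hA, hB, hC⟩ := h
  subst hB
  have hω : ω1 = ω2 := by
    funext a
    by_cases ha : a = u1
    · subst ha; exact hC
    · have := congrFun hA a
      rwa [Function.update_of_ne ha, Function.update_of_ne ha] at this
  subst hω
  have hv : v1 = v2 := by
    have := congrFun hA u1
    rwa [Function.update_self, Function.update_self] at this
  subst hv; rfl

lemma mem_RngS {q t : ℕ} {ω' : Fin m → Fin n} {u : Fin m} {w : Fin n} :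
    (ω', u, w) ∈ RngS n m q t ↔
      (Xs q t (Function.update ω' u w)).Nonempty ∧
      istar q t (Function.update ω' u w) ≤ (w : ℕ) ∧ (w : ℕ) ≤ q := by
  simp only [RngS, Finset.mem_image, DomS, Finset.mem_filter, Finset.mem_univ, true_and]
  constructor
  · rintro ⟨⟨ω0, u0, v0⟩, ⟨hne, hle, hq'⟩, hF⟩
    simp only [FS, Prod.mk.injEq] at hF
    obtain ⟨hA, hB, hC⟩ := hF
    subst hA; subst hB; subst hC
    rw [Function.update_idem, Function.update_eq_self]
    exact ⟨hne, hle, hq'⟩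
  · rintro ⟨hne, hle, hq'⟩
    refine ⟨(Function.update ω' u w, u, ω' u), ⟨hne, ?_, ?_⟩, ?_⟩
    · simpa [Function.update_self] using hle
    · simpa [Function.update_self] using hq'
    · simp [FS, Function.update_idem, Function.update_eq_self, Function.update_self]

lemma drop {q t : ℕ} {ω' : Fin m → Fin n} {u : Fin m} {w : Fin n}
    (h1 : (Xs q (t+1) (Function.update ω' u w)).Nonempty)
    (h2 : istar q (t+1) (Function.update ω' u w) ≤ (w : ℕ))
    (h3 : (w : ℕ) ≤ q) :
    (Xs q t ω').Nonempty := by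
  have hXs := mem_Xs.mp (istar_mem h1)
  have hident := cnt_update q (Function.update ω' u w) u (ω' u)
    (istar q (t+1) (Function.update ω' u w))
  rw [Function.update_idem, Function.update_eq_self] at hident
  simp only [Function.update_self] at hident
  rw [if_pos ⟨h2, h3⟩] at hident
  refine ⟨istar q (t+1) (Function.update ω' u w), mem_Xs.mpr ⟨hXs.1, ?_⟩⟩
  have h4 := hXs.2
  split_ifs at hident <;> omega

lemma commonI_aux {q t : ℕ} {ω' : Fin m → Fin n} {u : Fin m} {w1 w2 : Fin n}
    (h1 : (Xs q (t+1) (Function.update ω' u w1)).Nonempty)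
    (h2 : istar q (t+1) (Function.update ω' u w1) ≤ (w1 : ℕ))
    (h3 : (w1 : ℕ) ≤ q)
    (h4 : (Xs q (t+1) (Function.update ω' u w2)).Nonempty)
    (h5 : istar q (t+1) (Function.update ω' u w2) ≤ (w2 : ℕ))
    (h6 : (w2 : ℕ) ≤ q)
    (hle : istar q (t+1) (Function.update ω' u w1) ≤ istar q (t+1) (Function.update ω' u w2)) :
    istar q (t+1) (Function.update ω' u w2) ≤ istar q (t+1) (Function.update ω' u w1) := by
  have hX1 := mem_Xs.mp (istar_mem h1)
  have hident := cnt_update q (Function.update ω' u w1) u w2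
    (istar q (t+1) (Function.update ω' u w1))
  rw [Function.update_idem] at hident
  simp only [Function.update_self] at hident
  rw [if_pos ⟨h2, h3⟩, if_pos ⟨le_trans hle h5, h6⟩] at hident
  refine istar_le h4 (mem_Xs.mpr ⟨le_trans h2 h3, ?_⟩)
  have h7 := hX1.2
  omega

lemma switch (hn : 0 < n) (q t : ℕ) :
    ((EtF n m q (t+1)).card : ℝ) ≤ (m : ℝ) / n * ((EtF n m q t).card : ℝ) := by
  have hn' : (n : ℝ) ≠ 0 := Nat.cast_ne_zero.mpr hn.ne'
  have hcntpos : ∀ ω : Fin m → Fin n, (Xs q (t+1) ω).Nonempty →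
      0 < cnt q ω (istar q (t+1) ω) := by
    intro ω h
    have := (mem_Xs.mp (istar_mem h)).2
    omega
  -- STEP 1
  have step1 : ∑ p ∈ DomS n m q (t+1), WS n m q (t+1) p.1
      = ((EtF n m q (t+1)).card : ℝ) := by
    rw [DomS, Finset.sum_filter, Fintype.sum_prod_type]
    have hper : ∀ ω : Fin m → Fin n,
        (∑ uv : Fin m × Fin n,
          if (Xs q (t+1) ω).Nonempty ∧ istar q (t+1) ω ≤ ((ω uv.1 : Fin n) : ℕ)
              ∧ ((ω uv.1 : Fin n) : ℕ) ≤ q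
          then WS n m q (t+1) ω else 0)
        = if (Xs q (t+1) ω).Nonempty then (1:ℝ) else 0 := by
      intro ω
      by_cases hω : (Xs q (t+1) ω).Nonempty
      · rw [if_pos hω]
        have e1 : ∀ uv : Fin m × Fin n,
            (if (Xs q (t+1) ω).Nonempty ∧ istar q (t+1) ω ≤ ((ω uv.1 : Fin n) : ℕ)
                ∧ ((ω uv.1 : Fin n) : ℕ) ≤ q
             then WS n m q (t+1) ω else 0)
            = (if istar q (t+1) ω ≤ ((ω uv.1 : Fin n) : ℕ) ∧ ((ω uv.1 : Fin n) : ℕ) ≤ q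
               then WS n m q (t+1) ω else 0) := by
          intro uv; simp [hω]
        rw [Finset.sum_congr rfl fun uv _ => e1 uv, Fintype.sum_prod_type]
        have e2 : ∀ u : Fin m,
            (∑ _v : Fin n, if istar q (t+1) ω ≤ ((ω u : Fin n) : ℕ) ∧ ((ω u : Fin n) : ℕ) ≤ q
               then WS n m q (t+1) ω else 0)
            = (n : ℝ) * (if istar q (t+1) ω ≤ ((ω u : Fin n) : ℕ) ∧ ((ω u : Fin n) : ℕ) ≤ q
               then WS n m q (t+1) ω else 0) := by
          intro u
          rw [Finset.sum_const, Finset.card_univ, Fintype.card_fin, nsmul_eq_mul]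
        rw [Finset.sum_congr rfl fun u _ => e2 u, ← Finset.mul_sum, ← Finset.sum_filter,
          Finset.sum_const, nsmul_eq_mul]
        have h3 : (univ.filter fun u : Fin m =>
            istar q (t+1) ω ≤ ((ω u : Fin n) : ℕ) ∧ ((ω u : Fin n) : ℕ) ≤ q).card
            = cnt q ω (istar q (t+1) ω) := rfl
        rw [h3, WS]
        have hc := hcntpos ω hω
        have hc' : ((cnt q ω (istar q (t+1) ω) : ℕ) : ℝ) ≠ 0 :=
          Nat.cast_ne_zero.mpr hc.ne'
        field_simp
      · rw [if_neg hω]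
        exact Finset.sum_eq_zero fun uv _ => by simp [hω]
    rw [Finset.sum_congr rfl fun ω _ => hper ω, Finset.sum_boole]
    rfl
  -- STEP 2
  have step2 : ∑ p ∈ DomS n m q (t+1), WS n m q (t+1) p.1
      = ∑ p ∈ RngS n m q (t+1), WS n m q (t+1) (Function.update p.1 p.2.1 p.2.2) := by
    rw [RngS, Finset.sum_image (fun x _ y _ h => FS_inj h)]
    refine Finset.sum_congr rfl fun p _ => ?_
    simp only [FS, Function.update_idem, Function.update_eq_self]
  -- STEP 3
  have hfil : univ.filter (fun p : (Fin m → Fin n) × Fin m × Fin n =>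
      p ∈ RngS n m q (t+1)) = RngS n m q (t+1) := by
    ext p; simp
  have inner : ∀ (ω' : Fin m → Fin n) (u : Fin m),
      (∑ w : Fin n, if (ω', u, w) ∈ RngS n m q (t+1)
          then WS n m q (t+1) (Function.update ω' u w) else 0)
      ≤ (if (Xs q t ω').Nonempty then ((n:ℝ))⁻¹ else 0) := by
    intro ω' u
    by_cases hex : ∃ w : Fin n, (ω', u, w) ∈ RngS n m q (t+1)
    · obtain ⟨w0, hw0⟩ := hex
      have f0 := mem_RngS.mp hw0
      have hEt : (Xs q t ω').Nonempty := drop f0.1 f0.2.1 f0.2.2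
      rw [if_pos hEt]
      have hcom : ∀ w : Fin n, (ω', u, w) ∈ RngS n m q (t+1) →
          istar q (t+1) (Function.update ω' u w)
            = istar q (t+1) (Function.update ω' u w0) := by
        intro w hw
        have fw := mem_RngS.mp hw
        rcases le_total (istar q (t+1) (Function.update ω' u w))
            (istar q (t+1) (Function.update ω' u w0)) with hle | hle
        · exact le_antisymm hle (commonI_aux fw.1 fw.2.1 fw.2.2 f0.1 f0.2.1 f0.2.2 hle)
        · exact le_antisymm (commonI_aux f0.1 f0.2.1 f0.2.2 fw.1 fw.2.1 fw.2.2 hle) hle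
      set I := istar q (t+1) (Function.update ω' u w0) with hIdef
      have hterm : ∀ w : Fin n, (ω', u, w) ∈ RngS n m q (t+1) →
          WS n m q (t+1) (Function.update ω' u w)
            ≤ ((n:ℝ) * ((q - I + (t+1) : ℕ) : ℝ))⁻¹ := by
        intro w hw
        have fw := mem_RngS.mp hw
        have hcnt : q - I + (t+1) ≤ cnt q (Function.update ω' u w) I := by
          have hmem := (mem_Xs.mp (istar_mem fw.1)).2
          rw [hcom w hw] at hmem
          exact hmem
        rw [WS, hcom w hw]
        apply inv_anti₀
        · positivity
        · have : ((q - I + (t+1) : ℕ) : ℝ) ≤ (cnt q (Function.update ω' u w) I : ℝ) := by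
            exact_mod_cast hcnt
          exact mul_le_mul_of_nonneg_left this (Nat.cast_nonneg n)
      calc (∑ w : Fin n, if (ω', u, w) ∈ RngS n m q (t+1)
              then WS n m q (t+1) (Function.update ω' u w) else 0)
          ≤ ∑ w : Fin n, (if (ω', u, w) ∈ RngS n m q (t+1)
              then ((n:ℝ) * ((q - I + (t+1) : ℕ) : ℝ))⁻¹ else 0) := by
            apply Finset.sum_le_sum
            intro w _
            split_ifs with h
            · exact hterm w h
            · exact le_rfl
        _ = ((univ.filter fun w : Fin n => (ω', u, w) ∈ RngS n m q (t+1)).card : ℝ)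
              * ((n:ℝ) * ((q - I + (t+1) : ℕ) : ℝ))⁻¹ := by
            rw [← Finset.sum_filter, Finset.sum_const, nsmul_eq_mul]
        _ ≤ (((q - I + 1 : ℕ) : ℝ)) * ((n:ℝ) * ((q - I + (t+1) : ℕ) : ℝ))⁻¹ := by
            apply mul_le_mul_of_nonneg_right _ (by positivity)
            have hcard : (univ.filter fun w : Fin n =>
                (ω', u, w) ∈ RngS n m q (t+1)).card ≤ q - I + 1 := by
              have hsub : ∀ w ∈ univ.filter (fun w : Fin n =>
                  (ω', u, w) ∈ RngS n m q (t+1)), (w : ℕ) ∈ Finset.Icc I q := by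
                intro w hw
                rw [Finset.mem_filter] at hw
                have fw := mem_RngS.mp hw.2
                rw [Finset.mem_Icc]
                exact ⟨by rw [← hcom w hw.2]; exact fw.2.1, fw.2.2⟩
              have hinj := Finset.card_le_card_of_injOn (fun w : Fin n => (w : ℕ)) hsub
                Fin.val_injective.injOn
              rw [Nat.card_Icc] at hinj
              omega
            exact_mod_cast hcard
        _ ≤ ((n:ℝ))⁻¹ := by
            have hb : (0:ℝ) < ((q - I + (t+1) : ℕ) : ℝ) := by positivity
            have hab : ((q - I + 1 : ℕ) : ℝ) ≤ ((q - I + (t+1) : ℕ) : ℝ) := by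
              exact_mod_cast (by omega : (q - I + 1 : ℕ) ≤ q - I + (t+1))
            rw [mul_inv]
            calc ((q - I + 1 : ℕ) : ℝ) * ((n:ℝ)⁻¹ * ((q - I + (t+1) : ℕ) : ℝ)⁻¹)
                = (((q - I + 1 : ℕ) : ℝ) / ((q - I + (t+1) : ℕ) : ℝ)) * (n:ℝ)⁻¹ := by
                  ring
              _ ≤ 1 * (n:ℝ)⁻¹ := by
                  apply mul_le_mul_of_nonneg_right _ (by positivity)
                  exact div_le_one_of_le₀ hab hb.le
              _ = ((n:ℝ))⁻¹ := one_mul _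
    · have hz : (∑ w : Fin n, if (ω', u, w) ∈ RngS n m q (t+1)
          then WS n m q (t+1) (Function.update ω' u w) else 0) = 0 :=
        Finset.sum_eq_zero fun w _ => by
          rw [if_neg (fun h => hex ⟨w, h⟩)]
      rw [hz]
      split_ifs
      · positivity
      · exact le_rfl
  have step3 : ∑ p ∈ RngS n m q (t+1), WS n m q (t+1) (Function.update p.1 p.2.1 p.2.2)
      ≤ (m : ℝ) / n * ((EtF n m q t).card : ℝ) := by
    rw [← hfil, Finset.sum_filter, Fintype.sum_prod_type]
    have hmid : ∀ ω' : Fin m → Fin n,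
        (∑ uv : Fin m × Fin n, if (ω', uv.1, uv.2) ∈ RngS n m q (t+1)
            then WS n m q (t+1) (Function.update ω' uv.1 uv.2) else 0)
        ≤ (m : ℝ) * (if (Xs q t ω').Nonempty then ((n:ℝ))⁻¹ else 0) := by
      intro ω'
      rw [Fintype.sum_prod_type]
      calc (∑ u : Fin m, ∑ w : Fin n, if (ω', u, w) ∈ RngS n m q (t+1)
              then WS n m q (t+1) (Function.update ω' u w) else 0)
          ≤ ∑ _u : Fin m, (if (Xs q t ω').Nonempty then ((n:ℝ))⁻¹ else 0) :=
            Finset.sum_le_sum fun u _ => inner ω' u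
        _ = (m : ℝ) * (if (Xs q t ω').Nonempty then ((n:ℝ))⁻¹ else 0) := by
            rw [Finset.sum_const, Finset.card_univ, Fintype.card_fin, nsmul_eq_mul]
    calc (∑ ω' : Fin m → Fin n, ∑ uv : Fin m × Fin n,
            if ((ω', uv.1, uv.2) : (Fin m → Fin n) × Fin m × Fin n) ∈ RngS n m q (t+1)
            then WS n m q (t+1) (Function.update ω' uv.1 uv.2) else 0)
        ≤ ∑ ω' : Fin m → Fin n, (m : ℝ) * (if (Xs q t ω').Nonempty then ((n:ℝ))⁻¹ else 0) :=
          Finset.sum_le_sum fun ω' _ => hmid ω'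
      _ = (m : ℝ) / n * ((EtF n m q t).card : ℝ) := by
          have e : ∀ ω' : Fin m → Fin n,
              (m : ℝ) * (if (Xs q t ω').Nonempty then ((n:ℝ))⁻¹ else 0)
              = (m : ℝ) / n * (if (Xs q t ω').Nonempty then (1:ℝ) else 0) := by
            intro ω'; split_ifs <;> field_simp <;> simp
          rw [Finset.sum_congr rfl fun ω' _ => e ω', ← Finset.mul_sum, Finset.sum_boole]
          rfl
  calc ((EtF n m q (t+1)).card : ℝ) = _ := step1.symm
    _ = _ := step2
    _ ≤ _ := step3

lemma placePos_spec (occ : Finset ℕ) (h : ℕ) :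
    h ≤ placePos occ h ∧ placePos occ h ∉ occ := by
  have hne : {p : ℕ | h ≤ p ∧ p ∉ occ}.Nonempty := by
    refine ⟨occ.sup id + 1 + h, by omega, fun hmem => ?_⟩
    have := Finset.le_sup (f := id) hmem
    simp only [id] at this
    omega
  exact Nat.sInf_mem hne

lemma placePos_full (occ : Finset ℕ) (h y : ℕ) (hy1 : h ≤ y) (hy2 : y < placePos occ h) :
    y ∈ occ := by
  by_contra hno
  have : y ∈ {p : ℕ | h ≤ p ∧ p ∉ occ} := ⟨hy1, hno⟩
  have := Nat.sInf_le this
  rw [placePos] at hy2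
  omega

lemma inv (L : List ℕ) (j : ℕ) :
    ∃ i, i ≤ j ∧ ((occAfter L).filter (fun p => j ≤ p)).card + j ≤
      L.countP (fun h => decide (i ≤ h)) + i := by
  induction L generalizing j with
  | nil => exact ⟨j, le_rfl, by simp [occAfter]⟩
  | cons h rest ih =>
    have hocc : occAfter (h :: rest) = insert (placePos (occAfter rest) h) (occAfter rest) := rfl
    obtain ⟨hple, hpnot⟩ := placePos_spec (occAfter rest) h
    by_cases hjp : j ≤ placePos (occAfter rest) h
    · have hcard : ((occAfter (h :: rest)).filter (fun p => j ≤ p)).card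
          = ((occAfter rest).filter (fun p => j ≤ p)).card + 1 := by
        rw [hocc, Finset.filter_insert, if_pos hjp,
          Finset.card_insert_of_notMem (fun hmem => hpnot (Finset.mem_filter.mp hmem).1)]
      by_cases hhj : j ≤ h
      · obtain ⟨i, hij, hIH⟩ := ih j
        refine ⟨i, hij, ?_⟩
        rw [hcard, List.countP_cons]
        have hd : (decide (i ≤ h)) = true := decide_eq_true_eq.mpr (le_trans hij hhj)
        rw [if_pos hd]
        omega
      · push_neg at hhj
        -- h < j ≤ p : interval [h, j-1] fully occupied
        have hfull : Finset.Icc h (j-1) ⊆ (occAfter rest).filter (fun p => h ≤ p) := by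
          intro y hy
          rw [Finset.mem_Icc] at hy
          rw [Finset.mem_filter]
          exact ⟨placePos_full _ _ _ hy.1 (by omega), hy.1⟩
        have hdisj : Disjoint ((occAfter rest).filter (fun p => j ≤ p)) (Finset.Icc h (j-1)) := by
          rw [Finset.disjoint_left]
          intro a ha hb
          rw [Finset.mem_filter] at ha
          rw [Finset.mem_Icc] at hb
          omega
        have hsub : ((occAfter rest).filter (fun p => j ≤ p)) ∪ Finset.Icc h (j-1)
            ⊆ (occAfter rest).filter (fun p => h ≤ p) := by
          intro a ha
          rw [Finset.mem_union] at ha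
          rcases ha with ha | ha
          · rw [Finset.mem_filter] at ha ⊢
            exact ⟨ha.1, by omega⟩
          · exact hfull ha
        have hge : ((occAfter rest).filter (fun p => j ≤ p)).card + (j - h)
            ≤ ((occAfter rest).filter (fun p => h ≤ p)).card := by
          have h1 := Finset.card_le_card hsub
          rw [Finset.card_union_of_disjoint hdisj, Nat.card_Icc] at h1
          omega
        obtain ⟨i, hih, hIH⟩ := ih h
        refine ⟨i, by omega, ?_⟩
        rw [hcard, List.countP_cons]
        have hd : (decide (i ≤ h)) = true := decide_eq_true_eq.mpr hih
        rw [if_pos hd]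
        omega
    · push_neg at hjp
      obtain ⟨i, hij, hIH⟩ := ih j
      refine ⟨i, hij, ?_⟩
      rw [hocc, Finset.filter_insert, if_neg (by omega), List.countP_cons]
      omega

lemma countP_ofFn {m : ℕ} (fn : Fin m → ℕ) (P : ℕ → Prop) [DecidablePred P] :
    (List.ofFn fn).countP (fun a => decide (P a)) = (univ.filter fun u => P (fn u)).card := by
  induction m with
  | zero => simp
  | succ m ih =>
    rw [List.ofFn_succ, List.countP_cons, ih (fun i => fn i.succ)]
    rw [Finset.card_filter, Finset.card_filter, Fin.sum_univ_succ]
    simp only [decide_eq_true_eq]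
    omega

lemma cnt_split {n m : ℕ} (q : ℕ) (ω : Fin m → Fin n) (i : ℕ) (hiq : i ≤ q) :
    (univ.filter fun u => i ≤ (ω u : ℕ)).card
      = (univ.filter fun u => i ≤ (ω u : ℕ) ∧ (ω u : ℕ) ≤ q).card
        + (univ.filter fun u : Fin m => q < (ω u : ℕ)).card := by
  have key := Finset.card_filter_add_card_filter_not
    (s := univ.filter fun u : Fin m => i ≤ (ω u : ℕ)) (p := fun u => (ω u : ℕ) ≤ q)
  rw [Finset.filter_filter, Finset.filter_filter] at key
  have h2 : (univ.filter fun u : Fin m => i ≤ (ω u : ℕ) ∧ ¬ (ω u : ℕ) ≤ q)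
      = univ.filter fun u : Fin m => q < (ω u : ℕ) := by
    ext u
    simp only [Finset.mem_filter, Finset.mem_univ, true_and]
    omega
  rw [h2] at key
  omega


lemma EtF_card_bound (hn : 0 < n) (q : ℕ) : ∀ t : ℕ,
    ((EtF n m q t).card : ℝ) ≤ ((m : ℝ) / n) ^ t * (n : ℝ) ^ m := by
  intro t
  induction t with
  | zero =>
    simp only [pow_zero, one_mul]
    calc ((EtF n m q 0).card : ℝ) ≤ ((Finset.univ : Finset (Fin m → Fin n)).card : ℝ) := by
          exact_mod_cast Finset.card_le_card (Finset.filter_subset _ _)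
      _ = (n : ℝ) ^ m := by
          rw [Finset.card_univ]
          simp [Fintype.card_fun]
  | succ t ih =>
    calc ((EtF n m q (t+1)).card : ℝ) ≤ (m : ℝ) / n * ((EtF n m q t).card : ℝ) :=
          switch hn q t
      _ ≤ (m : ℝ) / n * (((m : ℝ) / n) ^ t * (n : ℝ) ^ m) := by
          apply mul_le_mul_of_nonneg_left ih (by positivity)
      _ = ((m : ℝ) / n) ^ (t + 1) * (n : ℝ) ^ m := by ring

lemma event_subset (q : ℕ) (x k : ℝ) (hkx : 1 < k * x) :
    (univ.filter fun ω : Fin m → Fin n => k * x ≤ (queryTime ω q : ℝ))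
      ⊆ EtF n m q (⌈k * x⌉₊ - 1) := by
  intro ω hω
  rw [Finset.mem_filter] at hω
  rw [EtF, Finset.mem_filter]
  refine ⟨Finset.mem_univ _, ?_⟩
  have hceil2 : 2 ≤ ⌈k * x⌉₊ := by
    have h11 : 1 < ⌈k * x⌉₊ := by
      rw [Nat.lt_ceil]
      exact_mod_cast hkx
    omega
  have hev := hω.2
  have h1 : ⌈k * x⌉₊ ≤ queryTime ω q := by
    rw [Nat.ceil_le]
    exact_mod_cast hev
  unfold queryTime at h1
  obtain ⟨i, hiq, hinv⟩ := inv (List.ofFn fun u => ((ω u : Fin n) : ℕ)) q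
  rw [countP_ofFn] at hinv
  have hsplit := cnt_split q ω i hiq
  have hcnt : cnt q ω i
      = (univ.filter fun u => i ≤ ((ω u : Fin n) : ℕ) ∧ ((ω u : Fin n) : ℕ) ≤ q).card := rfl
  refine ⟨i, mem_Xs.mpr ⟨hiq, ?_⟩⟩
  omega

end S16

/-- In an ordered linear-probing table with `n` slots containing
`m = (1-1/x)n` elements with i.i.d. uniform hashes and no tombstones, any query
(hashing to any position `q`) has running time `T` with
`Pr[T ≥ kx] ≤ 2^{-Ω(k)}` for all `k ≥ 1`. -/
theorem stmt16 :
    ∃ c : ℝ, 0 < c ∧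
      ∀ (n m : ℕ) (x k : ℝ) (q : ℕ), 0 < n → 1 < x → 1 ≤ k →
        ((m : ℝ) = (1 - 1 / x) * n) →
        ((Finset.univ.filter (fun ω : Fin m → Fin n =>
            k * x ≤ (queryTime ω q : ℝ))).card : ℝ)
          ≤ (2 : ℝ) ^ (-(c * k)) * (n : ℝ) ^ m := by

  refine ⟨1/2, by norm_num, ?_⟩
  intro n m x k q hn hx hk hm
  have hx0 : (0 : ℝ) < x := by linarith
  have hkx : 1 < k * x := by nlinarith
  have hceil2 : 2 ≤ ⌈k * x⌉₊ := by
    have h11 : 1 < ⌈k * x⌉₊ := by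
      rw [Nat.lt_ceil]
      exact_mod_cast hkx
    omega
  have hcard : ((Finset.univ.filter (fun ω : Fin m → Fin n =>
      k * x ≤ (queryTime ω q : ℝ))).card : ℝ)
      ≤ ((S16.EtF n m q (⌈k * x⌉₊ - 1)).card : ℝ) := by
    exact_mod_cast Finset.card_le_card (S16.event_subset q x k hkx)
  have hbound := S16.EtF_card_bound (n := n) (m := m) hn q (⌈k * x⌉₊ - 1)
  have hn' : (n : ℝ) ≠ 0 := Nat.cast_ne_zero.mpr hn.ne'
  have hmn : (m : ℝ) / n = 1 - 1 / x := by
    rw [hm]; field_simp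
  -- numeric facts about t
  have htR : k * x - 1 ≤ ((⌈k * x⌉₊ - 1 : ℕ) : ℝ) := by
    have h1 : k * x ≤ (⌈k * x⌉₊ : ℝ) := Nat.le_ceil _
    have h2 : ((⌈k * x⌉₊ - 1 : ℕ) : ℝ) = (⌈k * x⌉₊ : ℝ) - 1 := by
      push_cast [Nat.cast_sub (by omega : 1 ≤ ⌈k * x⌉₊)]
      ring
    linarith
  have ht1 : (1 : ℝ) ≤ ((⌈k * x⌉₊ - 1 : ℕ) : ℝ) := by
    have : 1 ≤ ⌈k * x⌉₊ - 1 := by omega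
    exact_mod_cast this
  have hthalf : k / 2 ≤ ((⌈k * x⌉₊ - 1 : ℕ) : ℝ) := by
    rcases le_total k 2 with hk2 | hk2
    · linarith
    · nlinarith
  have hfinal : ((m : ℝ) / n) ^ (⌈k * x⌉₊ - 1) ≤ (2 : ℝ) ^ (-(1/2 * k)) := by
    rw [hmn]
    have h0 : (0 : ℝ) ≤ 1 - 1 / x := by
      have : 1 / x ≤ 1 := by
        rw [div_le_one hx0]; linarith
      linarith
    rcases le_total x 2 with hx2 | hx2
    · have hhalf : 1 - 1 / x ≤ 1 / 2 := by
        have h12 : (1 : ℝ) / 2 ≤ 1 / x := by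
          rw [le_div_iff₀ hx0]; linarith
        linarith
      calc (1 - 1 / x) ^ (⌈k * x⌉₊ - 1) ≤ (1 / 2 : ℝ) ^ (⌈k * x⌉₊ - 1) :=
            pow_le_pow_left₀ h0 hhalf _
        _ = (2 : ℝ) ^ (-((⌈k * x⌉₊ - 1 : ℕ) : ℝ)) := by
            rw [one_div, inv_pow, ← Real.rpow_natCast (2 : ℝ) (⌈k * x⌉₊ - 1),
              ← Real.rpow_neg (by norm_num : (0:ℝ) ≤ 2)]
        _ ≤ (2 : ℝ) ^ (-(1/2 * k)) := by
            apply Real.rpow_le_rpow_of_exponent_le (by norm_num)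
            linarith
    · have he : 1 - 1 / x ≤ Real.exp (-(1 / x)) := by
        have := Real.add_one_le_exp (-(1 / x))
        linarith
      have hkx2 : 2 ≤ k * x := by nlinarith
      have htx : k / 2 * x ≤ ((⌈k * x⌉₊ - 1 : ℕ) : ℝ) := by nlinarith
      calc (1 - 1 / x) ^ (⌈k * x⌉₊ - 1) ≤ (Real.exp (-(1 / x))) ^ (⌈k * x⌉₊ - 1) :=
            pow_le_pow_left₀ h0 he _
        _ = Real.exp (((⌈k * x⌉₊ - 1 : ℕ) : ℝ) * (-(1 / x))) := by
            rw [← Real.exp_nat_mul]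
        _ ≤ (2 : ℝ) ^ (-(1/2 * k)) := by
            rw [Real.rpow_def_of_pos (by norm_num : (0:ℝ) < 2)]
            apply Real.exp_le_exp.mpr
            have hlog1 : Real.log 2 ≤ 1 := by
              have := Real.log_le_sub_one_of_pos (by norm_num : (0:ℝ) < 2)
              linarith
            have hlog0 : 0 ≤ Real.log 2 := Real.log_nonneg (by norm_num)
            have hx0' : (0 : ℝ) < 1 / x := by positivity
            have key : k / 2 ≤ ((⌈k * x⌉₊ - 1 : ℕ) : ℝ) * (1 / x) := by
              have h3 : k / 2 * x * (1 / x) ≤ ((⌈k * x⌉₊ - 1 : ℕ) : ℝ) * (1 / x) :=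
                mul_le_mul_of_nonneg_right htx hx0'.le
              have h4 : k / 2 * x * (1 / x) = k / 2 := by field_simp
              linarith
            have hk0 : (0 : ℝ) ≤ k / 2 := by linarith
            nlinarith [mul_le_mul_of_nonneg_left hlog1 hk0]
  calc ((Finset.univ.filter (fun ω : Fin m → Fin n =>
          k * x ≤ (queryTime ω q : ℝ))).card : ℝ)
      ≤ ((S16.EtF n m q (⌈k * x⌉₊ - 1)).card : ℝ) := hcard
    _ ≤ ((m : ℝ) / n) ^ (⌈k * x⌉₊ - 1) * (n : ℝ) ^ m := hbound
    _ ≤ (2 : ℝ) ^ (-(1/2 * k)) * (n : ℝ) ^ m := by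
        apply mul_le_mul_of_nonneg_right hfinal (by positivity)
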